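/- Suppose θ and φ are two inner functions and g ∈ H^∞ is a function with 1/g ∈ H^∞ such that θ/φ = g/\bar{g} holds m-a.e. on T. Then for every 1 ≤ p ≤ ∞ one has K^p_θ = g·K^p_φ := { g·h : h ∈ K^p_φ }. -/

import Mathlib

open MeasureTheory Complex Set Metric ENNReal

noncomputable section

/-- Normalized Lebesgue (arclength) measure `m` on the unit circle `T`, as a measure on `ℂ`. -/
def circleMeasure : Measure ℂ :=
  (ENNReal.ofReal (2 * Real.pi))⁻¹ •
    Measure.map (fun t : ℝ => Complex.exp (t * Complex.I)) (volume.restrict (Ioc 0 (2 * Real.pi)))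

/-- The open unit disk `D`. -/
def unitDisk : Set ℂ := ball (0 : ℂ) 1

/-- `g` is, `m`-a.e. on the circle, the (radial) boundary-value function of `f`. -/
def IsBoundaryValue (f g : ℂ → ℂ) : Prop :=
  ∀ᵐ ζ ∂circleMeasure,
    Filter.Tendsto (fun r : ℝ => f (((r : ℂ)) * ζ)) (nhdsWithin 1 (Iio 1)) (nhds (g ζ))

/-- The Hardy norm `‖f‖_p`; for `p = ∞` it is the sup norm over the disk. -/
def hNorm (p : ℝ≥0∞) (f : ℂ → ℂ) : ℝ≥0∞ :=
  if p = ⊤ then ⨆ z : unitDisk, (‖f (z : ℂ)‖₊ : ℝ≥0∞)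
  else ⨆ r : Ioo (0 : ℝ) 1,
    (∫⁻ ζ, (‖f ((((r : ℝ) : ℂ)) * ζ)‖₊ : ℝ≥0∞) ^ p.toReal ∂circleMeasure) ^ (1 / p.toReal)

/-- Membership in the Hardy space `H^p` (with `f` identified with its boundary values,
i.e. the values of `f` on the circle are `m`-a.e. its radial limits from the disk). -/
def MemHp (p : ℝ≥0∞) (f : ℂ → ℂ) : Prop :=
  DifferentiableOn ℂ f unitDisk ∧ hNorm p f < ⊤ ∧ IsBoundaryValue f f

/-- Inner functions: bounded holomorphic with unimodular boundary values. -/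
def IsInner (θ : ℂ → ℂ) : Prop :=
  MemHp ⊤ θ ∧ ∀ᵐ ζ ∂circleMeasure, ‖θ ζ‖ = 1

/-- `θ` is nonconstant on the unit disk. -/
def Nonconstant (θ : ℂ → ℂ) : Prop := ¬ ∃ c : ℂ, ∀ z ∈ unitDisk, θ z = c

/-- Membership in the star-invariant subspace `K^p_θ`:  `f ∈ H^p` and the function
`ζ ↦ conj ζ * conj (f ζ) * θ ζ` on the circle coincides `m`-a.e. with (the boundary values of)
an `H^p` function. -/
def MemKp (p : ℝ≥0∞) (θ f : ℂ → ℂ) : Prop :=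
  MemHp p f ∧ ∃ h : ℂ → ℂ, MemHp p h ∧
    ∀ᵐ ζ ∂circleMeasure, h ζ = (starRingEnd ℂ) ζ * (starRingEnd ℂ) (f ζ) * θ ζ

/-- `u ∈ Re H^p`. -/
def MemReHp (p : ℝ≥0∞) (u : ℂ → ℝ) : Prop :=
  ∃ f : ℂ → ℂ, MemHp p f ∧ ∀ᵐ ζ ∂circleMeasure, u ζ = (f ζ).re

/-- `u ∈ Re K^p_θ`. -/
def MemReKp (p : ℝ≥0∞) (θ : ℂ → ℂ) (u : ℂ → ℝ) : Prop :=
  ∃ f : ℂ → ℂ, MemKp p θ f ∧ ∀ᵐ ζ ∂circleMeasure, u ζ = (f ζ).re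

/-! ### Auxiliary lemmas -/

lemma circle_exp_meas : Measurable fun t : ℝ => Complex.exp (t * Complex.I) := by
  fun_prop

lemma circle_ae_norm_one : ∀ᵐ ζ ∂circleMeasure, ‖ζ‖ = 1 := by
  rw [Filter.eventually_iff, mem_ae_iff]
  have hS : MeasurableSet {ζ : ℂ | ‖ζ‖ = 1}ᶜ :=
    ((measurableSet_eq_fun (by fun_prop) measurable_const)).compl
  rw [circleMeasure, Measure.smul_apply, Measure.map_apply circle_exp_meas hS]
  have : (fun t : ℝ => Complex.exp (t * Complex.I)) ⁻¹' {ζ : ℂ | ‖ζ‖ = 1}ᶜ = ∅ := by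
    ext t; simp [Complex.norm_exp_ofReal_mul_I]
  simp [this]

lemma circleMeasure_univ : circleMeasure univ = 1 := by
  rw [circleMeasure, Measure.smul_apply, Measure.map_apply circle_exp_meas MeasurableSet.univ]
  have h2pi : (0:ℝ) < 2 * Real.pi := by positivity
  simp [Measure.restrict_apply, Real.volume_Ioc, smul_eq_mul]
  rw [ENNReal.inv_mul_cancel]
  · simp [ENNReal.ofReal_pos, h2pi, Real.pi_pos]
  · exact ENNReal.mul_ne_top (by simp) ENNReal.ofReal_ne_top

lemma mem_disk_of_r {r : ℝ} (hr : r ∈ Ioo (0:ℝ) 1) {ζ : ℂ} (hζ : ‖ζ‖ = 1) :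
    ((r : ℂ)) * ζ ∈ unitDisk := by
  simp only [unitDisk, mem_ball, dist_zero_right, norm_mul, Complex.norm_real, hζ,
    Real.norm_eq_abs, mul_one, abs_of_pos hr.1]
  exact hr.2

lemma eventually_Ioo : ∀ᶠ r in nhdsWithin (1:ℝ) (Iio 1), r ∈ Ioo (0:ℝ) 1 := by
  have h1 : ∀ᶠ r in nhdsWithin (1:ℝ) (Iio 1), r ∈ Iio (1:ℝ) := eventually_mem_nhdsWithin
  have h2 : ∀ᶠ r in nhdsWithin (1:ℝ) (Iio 1), (0:ℝ) < r :=
    (eventually_gt_nhds (by norm_num : (0:ℝ) < 1)).filter_mono nhdsWithin_le_nhds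
  filter_upwards [h1, h2] with r hr1 hr2 using ⟨hr2, hr1⟩

lemma memHp_mul_aux (p : ℝ≥0∞) (hp : 1 ≤ p) (k h f : ℂ → ℂ)
    (hk : MemHp ⊤ k) (hh : MemHp p h)
    (hdisk : ∀ z ∈ unitDisk, f z = k z * h z)
    (hcirc : ∀ᵐ ζ ∂circleMeasure, f ζ = k ζ * h ζ) : MemHp p f := by
  set C : ℝ≥0∞ := hNorm ⊤ k with hC
  have hCtop : C < ⊤ := hk.2.1
  have hCle : ∀ z ∈ unitDisk, (‖k z‖₊ : ℝ≥0∞) ≤ C := by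
    intro z hz
    have : (‖k z‖₊ : ℝ≥0∞) ≤ ⨆ w : unitDisk, (‖k (w : ℂ)‖₊ : ℝ≥0∞) :=
      le_iSup (fun w : unitDisk => (‖k (w : ℂ)‖₊ : ℝ≥0∞)) ⟨z, hz⟩
    simpa [hC, hNorm] using this
  refine ⟨(hk.1.mul hh.1).congr hdisk, ?_, ?_⟩
  · -- norm bound
    by_cases hptop : p = ⊤
    · subst hptop
      rw [hNorm, if_pos rfl]
      have : (⨆ z : unitDisk, (‖f (z : ℂ)‖₊ : ℝ≥0∞)) ≤ C * hNorm ⊤ h := by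
        refine iSup_le fun z => ?_
        rw [hdisk z z.2]
        calc (‖k (z:ℂ) * h (z:ℂ)‖₊ : ℝ≥0∞) = (‖k (z:ℂ)‖₊ : ℝ≥0∞) * ‖h (z:ℂ)‖₊ := by
              rw [nnnorm_mul]; norm_cast
          _ ≤ C * hNorm ⊤ h := by
              refine mul_le_mul' (hCle _ z.2) ?_
              have : (‖h (z:ℂ)‖₊ : ℝ≥0∞) ≤ ⨆ w : unitDisk, (‖h (w : ℂ)‖₊ : ℝ≥0∞) :=
                le_iSup (fun w : unitDisk => (‖h (w : ℂ)‖₊ : ℝ≥0∞)) z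
              simpa [hNorm] using this
      exact lt_of_le_of_lt this (ENNReal.mul_lt_top hCtop hh.2.1)
    · have hpt : 0 < p.toReal := ENNReal.toReal_pos (by rintro rfl; simp at hp) hptop
      rw [hNorm, if_neg hptop]
      have key : ∀ r : Ioo (0:ℝ) 1,
          (∫⁻ ζ, (‖f ((((r:ℝ):ℂ)) * ζ)‖₊ : ℝ≥0∞) ^ p.toReal ∂circleMeasure) ^ (1 / p.toReal)
            ≤ C * hNorm p h := by
        intro r
        have hint : (∫⁻ ζ, (‖f ((((r:ℝ):ℂ)) * ζ)‖₊ : ℝ≥0∞) ^ p.toReal ∂circleMeasure)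
            ≤ C ^ p.toReal * ∫⁻ ζ, (‖h ((((r:ℝ):ℂ)) * ζ)‖₊ : ℝ≥0∞) ^ p.toReal ∂circleMeasure := by
          rw [← lintegral_const_mul' _ _ (ENNReal.rpow_ne_top_of_nonneg hpt.le hCtop.ne)]
          refine lintegral_mono_ae ?_
          filter_upwards [circle_ae_norm_one] with ζ hζ
          have hmem := mem_disk_of_r r.2 hζ
          rw [hdisk _ hmem]
          calc (‖k _ * h _‖₊ : ℝ≥0∞) ^ p.toReal
              = ((‖k (((r:ℝ):ℂ) * ζ)‖₊ : ℝ≥0∞) * ‖h (((r:ℝ):ℂ) * ζ)‖₊) ^ p.toReal := by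
                rw [nnnorm_mul]; norm_cast
            _ ≤ (C * (‖h (((r:ℝ):ℂ) * ζ)‖₊ : ℝ≥0∞)) ^ p.toReal := by
                exact ENNReal.rpow_le_rpow (mul_le_mul_left (hCle _ hmem) _) hpt.le
            _ = C ^ p.toReal * (‖h (((r:ℝ):ℂ) * ζ)‖₊ : ℝ≥0∞) ^ p.toReal :=
                ENNReal.mul_rpow_of_nonneg _ _ hpt.le
        calc (∫⁻ ζ, (‖f ((((r:ℝ):ℂ)) * ζ)‖₊ : ℝ≥0∞) ^ p.toReal ∂circleMeasure) ^ (1 / p.toReal)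
            ≤ (C ^ p.toReal * ∫⁻ ζ, (‖h ((((r:ℝ):ℂ)) * ζ)‖₊ : ℝ≥0∞) ^ p.toReal ∂circleMeasure)
              ^ (1 / p.toReal) := ENNReal.rpow_le_rpow hint (by positivity)
          _ = C * (∫⁻ ζ, (‖h ((((r:ℝ):ℂ)) * ζ)‖₊ : ℝ≥0∞) ^ p.toReal ∂circleMeasure)
              ^ (1 / p.toReal) := by
              rw [ENNReal.mul_rpow_of_nonneg _ _ (by positivity), ← ENNReal.rpow_mul,
                mul_one_div, div_self hpt.ne', ENNReal.rpow_one]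
          _ ≤ C * hNorm p h := by
              refine mul_le_mul_right ?_ _
              rw [hNorm, if_neg hptop]
              exact le_iSup (fun r : Ioo (0:ℝ) 1 =>
                (∫⁻ ζ, (‖h ((((r:ℝ):ℂ)) * ζ)‖₊ : ℝ≥0∞) ^ p.toReal ∂circleMeasure)
                  ^ (1 / p.toReal)) r
      exact lt_of_le_of_lt (iSup_le key) (ENNReal.mul_lt_top hCtop hh.2.1)
  · -- boundary values
    filter_upwards [circle_ae_norm_one, hk.2.2, hh.2.2, hcirc] with ζ hζ hkt hht hfc
    rw [hfc]
    refine (hkt.mul hht).congr' ?_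
    filter_upwards [eventually_Ioo] with r hr
    rw [hdisk _ (mem_disk_of_r hr hζ)]

lemma g_ne_zero_on_disk (g : ℂ → ℂ) (hg : DifferentiableOn ℂ g unitDisk)
    (hginv : DifferentiableOn ℂ (fun z => (g z)⁻¹) unitDisk)
    (h0 : ∃ z ∈ unitDisk, g z ≠ 0) : ∀ z ∈ unitDisk, g z ≠ 0 := by
  set k : ℂ → ℂ := fun z => g z * (g z)⁻¹ with hk
  have hkcont : ContinuousOn k unitDisk := (hg.mul hginv).continuousOn
  have hkval : ∀ z, g z ≠ 0 → k z = 1 := fun z hz => by simp [hk, mul_inv_cancel₀ hz]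
  have hkval0 : ∀ z, g z = 0 → k z = 0 := fun z hz => by simp [hk, hz]
  have hopen : IsOpen unitDisk := isOpen_ball
  set u := unitDisk ∩ k ⁻¹' (ball (1:ℂ) (1/2)) with hu
  set v := unitDisk ∩ k ⁻¹' (ball (0:ℂ) (1/2)) with hv
  have hu_open : IsOpen u := hkcont.isOpen_inter_preimage hopen isOpen_ball
  have hv_open : IsOpen v := hkcont.isOpen_inter_preimage hopen isOpen_ball
  intro z hz
  by_contra hgz
  obtain ⟨z0, hz0, hgz0⟩ := h0
  have hpre : IsPreconnected unitDisk := (convex_ball (0:ℂ) 1).isPreconnected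
  have hcover : unitDisk ⊆ u ∪ v := by
    intro w hw
    by_cases hgw : g w = 0
    · right; exact ⟨hw, by simp [hkval0 w hgw]⟩
    · left; exact ⟨hw, by simp [hkval w hgw]⟩
  have hne : (unitDisk ∩ (u ∩ v)).Nonempty := by
    refine hpre u v hu_open hv_open hcover ⟨z0, hz0, hz0, by simp [hkval z0 hgz0]⟩
      ⟨z, hz, hz, by simp [hkval0 z hgz]⟩
  obtain ⟨w, _, ⟨_, hw1⟩, ⟨_, hw2⟩⟩ := hne
  simp only [mem_preimage, mem_ball] at hw1 hw2
  by_cases hgw : g w = 0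
  · rw [hkval0 w hgw] at hw1; norm_num at hw1
  · rw [hkval w hgw] at hw2; norm_num at hw2

/-- Lemma 2.2: if `θ/φ = g/conj g` a.e. on `T` with `g, 1/g ∈ H^∞`, then `K^p_θ = g·K^p_φ`
for all `1 ≤ p ≤ ∞`. -/
theorem Kp_eq_smul_Kp (θ φ g : ℂ → ℂ) (hθ : IsInner θ) (hφ : IsInner φ)
    (hg : MemHp ⊤ g) (hginv : MemHp ⊤ (fun z => (g z)⁻¹))
    (hquot : ∀ᵐ ζ ∂circleMeasure, θ ζ / φ ζ = g ζ / (starRingEnd ℂ) (g ζ)) :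
    ∀ p : ℝ≥0∞, 1 ≤ p → ∀ f : ℂ → ℂ,
      MemKp p θ f ↔
        ∃ h : ℂ → ℂ, MemKp p φ h ∧ (∀ z ∈ unitDisk, f z = g z * h z) ∧
          ∀ᵐ ζ ∂circleMeasure, f ζ = g ζ * h ζ := by
  have hgne : ∀ᵐ ζ ∂circleMeasure, g ζ ≠ 0 := by
    filter_upwards [hθ.2, hφ.2, hquot] with ζ h1 h2 h3
    intro hz
    rw [hz, map_zero, zero_div] at h3
    rcases div_eq_zero_iff.mp h3 with h | h
    · rw [h] at h1; simp at h1
    · rw [h] at h2; simp at h2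
  have hrel : ∀ᵐ ζ ∂circleMeasure,
      θ ζ * (starRingEnd ℂ) (g ζ) = φ ζ * g ζ := by
    filter_upwards [hφ.2, hquot, hgne] with ζ h2 h3 h4
    have hφne : φ ζ ≠ 0 := by intro h; rw [h] at h2; simp at h2
    have hcg : (starRingEnd ℂ) (g ζ) ≠ 0 := by
      intro h0
      apply h4
      have h0' := congrArg (starRingEnd ℂ) h0
      simpa using h0'
    rw [div_eq_div_iff hφne hcg] at h3
    linear_combination h3
  have hgz : ∀ z ∈ unitDisk, g z ≠ 0 := by
    apply g_ne_zero_on_disk g hg.1 hginv.1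
    by_contra hc
    push_neg at hc
    have hall : ∀ᵐ _ζ ∂circleMeasure, False := by
      filter_upwards [circle_ae_norm_one, hg.2.2, hgne] with ζ hζ ht hne
      have h0 : Filter.Tendsto (fun r : ℝ => g (((r:ℂ)) * ζ)) (nhdsWithin 1 (Iio 1))
          (nhds (0:ℂ)) := by
        refine Filter.Tendsto.congr' ?_ tendsto_const_nhds
        filter_upwards [eventually_Ioo] with r hr
        exact (hc _ (mem_disk_of_r hr hζ)).symm
      exact hne (tendsto_nhds_unique ht h0)
    have : circleMeasure univ = 0 := by simpa [ae_iff] using hall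
    rw [circleMeasure_univ] at this
    exact one_ne_zero this
  intro p hp f
  constructor
  · rintro ⟨hfHp, ft, hftHp, hfteq⟩
    refine ⟨fun z => (g z)⁻¹ * f z,
      ⟨memHp_mul_aux p hp _ f _ hginv hfHp (fun z _ => rfl)
        (Filter.Eventually.of_forall fun _ => rfl),
       fun z => (g z)⁻¹ * ft z,
       memHp_mul_aux p hp _ ft _ hginv hftHp (fun z _ => rfl)
        (Filter.Eventually.of_forall fun _ => rfl), ?_⟩, ?_, ?_⟩
    · filter_upwards [hfteq, hrel, hgne] with ζ h1 h2 h4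
      have hcg : (starRingEnd ℂ) (g ζ) ≠ 0 := by
        intro h0
        apply h4
        have h0' := congrArg (starRingEnd ℂ) h0
        simpa using h0'
      rw [h1, map_mul, map_inv₀]
      field_simp
      linear_combination ((starRingEnd ℂ) ζ * (starRingEnd ℂ) (f ζ)) * h2
    · intro z hz; field_simp [hgz z hz]
    · filter_upwards [hgne] with ζ h4; field_simp
  · rintro ⟨h, ⟨hhHp, ht, htHp, hteq⟩, hdisk, hae⟩
    refine ⟨memHp_mul_aux p hp g h f hg hhHp hdisk hae,
      fun z => g z * ht z,
      memHp_mul_aux p hp g ht _ hg htHp (fun z _ => rfl)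
        (Filter.Eventually.of_forall fun _ => rfl), ?_⟩
    filter_upwards [hteq, hrel, hae] with ζ h1 h2 h3
    rw [h1, h3, map_mul]
    linear_combination (-((starRingEnd ℂ) ζ * (starRingEnd ℂ) (h ζ))) * h2
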